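/- For every positive integer k, there exists a k-covering family consisting of exactly ⌊k²/4⌋ lists. In particular, the minimum size λ(k) of a k-covering family equals ⌊k²/4⌋. -/

import Mathlib

/-- `L` is a `k`-covering family: a collection of strictly increasing lists of
integers from `{1, ..., k}` such that for all `1 ≤ i < j ≤ k`, the integers
`i` and `j` appear as consecutive members of some list in `L`. -/
def IsCoveringFamily (k : ℕ) (L : Finset (List ℕ)) : Prop :=
  (∀ l ∈ L, l.Chain' (· < ·)) ∧
  (∀ l ∈ L, ∀ x ∈ l, 1 ≤ x ∧ x ≤ k) ∧
  (∀ i j : ℕ, 1 ≤ i → i < j → j ≤ k → ∃ l ∈ L, [i, j] <:+: l)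

/-- Arithmetic progression `a, a+d, ...` with values `≤ k`. -/
def apList (k a d : ℕ) : List ℕ := (List.range ((k - a)/d + 1)).map (fun t => a + t * d)

lemma apList_chain (k a d : ℕ) (hd : 0 < d) : (apList k a d).Chain' (· < ·) := by
  apply List.Pairwise.isChain
  rw [apList, List.pairwise_map]
  exact List.pairwise_lt_range.imp (fun {x y} h => by
    have : x * d < y * d := (Nat.mul_lt_mul_right hd).2 h
    omega)

lemma apList_mem {k a d x : ℕ} (hd : 0 < d) (ha : 1 ≤ a) (hak : a ≤ k)
    (hx : x ∈ apList k a d) : 1 ≤ x ∧ x ≤ k := by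
  rw [apList, List.mem_map] at hx
  obtain ⟨t, ht, rfl⟩ := hx
  rw [List.mem_range] at ht
  have h1 : t ≤ (k - a) / d := by omega
  have h2 : t * d ≤ ((k - a) / d) * d := Nat.mul_le_mul_right d h1
  have h3 : ((k - a) / d) * d ≤ k - a := Nat.div_mul_le_self _ _
  omega

lemma apList_len {k a d : ℕ} (hd : 0 < d) (hb : a + d ≤ k) :
    2 ≤ (apList k a d).length := by
  rw [apList, List.length_map, List.length_range]
  have : 1 ≤ (k - a) / d := (Nat.le_div_iff_mul_le hd).2 (by omega)
  omega

lemma apList_take2 {k a d : ℕ} (hd : 0 < d) (hb : a + d ≤ k) :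
    (apList k a d)[0]? = some a ∧ (apList k a d)[1]? = some (a + d) := by
  have hlen : 2 ≤ (apList k a d).length := apList_len hd hb
  have h0 : (0:ℕ) < (k - a)/d + 1 := by positivity
  have h1 : (1:ℕ) < (k - a)/d + 1 := by
    have : 1 ≤ (k - a) / d := (Nat.le_div_iff_mul_le hd).2 (by omega)
    omega
  constructor
  · rw [List.getElem?_eq_getElem (by omega)]
    simp [apList]
  · rw [List.getElem?_eq_getElem (by omega)]
    simp [apList, h1]

lemma apList_infix {k a d i : ℕ} (hd : 0 < d) (hai : a ≤ i) (hmod : d ∣ (i - a))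
    (hik : i + d ≤ k) : [i, i + d] <:+: apList k a d := by
  obtain ⟨t, ht⟩ := hmod
  have hdt : d * t = t * d := Nat.mul_comm d t
  have hi : i = a + t * d := by omega
  have hexp : (t + 1) * d = t * d + d := by ring
  have hle : t + 1 ≤ (k - a) / d := (Nat.le_div_iff_mul_le hd).2 (by omega)
  have heq : [i, i + d] = List.map (fun s => a + s * d) [t, t + 1] := by
    simp only [List.map_cons, List.map_nil, hi, hexp, Nat.add_assoc]
  rw [heq, apList]
  apply List.IsInfix.map
  have h1 : [t, t+1] <:+ List.range (t + 2) := by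
    rw [show t + 2 = (t+1).succ from rfl, List.range_succ, List.range_succ]
    exact ⟨List.range t, by simp⟩
  have h2 : List.range (t + 2) <+: List.range ((k - a)/d + 1) := by
    rw [List.prefix_iff_eq_take, List.take_range, List.length_range]
    congr 1
    omega
  exact h1.isInfix.trans h2.isInfix

/-- The index set: pairs `⟨b, a⟩` with `1 ≤ b ≤ k`, `1 ≤ a ≤ b/2`. -/
def idxS (k : ℕ) : Finset ((_ : ℕ) × ℕ) :=
  (Finset.Icc 1 k).sigma (fun b => Finset.Icc 1 (b / 2))

lemma mem_idxS {k : ℕ} {p : (_ : ℕ) × ℕ} :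
    p ∈ idxS k ↔ (1 ≤ p.1 ∧ p.1 ≤ k ∧ 1 ≤ p.2 ∧ 2 * p.2 ≤ p.1) := by
  rcases p with ⟨b, a⟩
  simp only [idxS, Finset.mem_sigma, Finset.mem_Icc]
  constructor
  · rintro ⟨⟨h1, h2⟩, h3, h4⟩
    have := (Nat.le_div_iff_mul_le (by norm_num : (0:ℕ) < 2)).1 h4
    omega
  · rintro ⟨h1, h2, h3, h4⟩
    exact ⟨⟨h1, h2⟩, h3, (Nat.le_div_iff_mul_le (by norm_num)).2 (by omega)⟩

lemma sum_half (k : ℕ) : ∑ b ∈ Finset.Icc 1 k, b / 2 = k ^ 2 / 4 := by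
  induction k with
  | zero => simp
  | succ n ih =>
    rw [Finset.sum_Icc_succ_top (by omega), ih]
    obtain ⟨m, rfl | rfl⟩ := n.even_or_odd'
    · have e1 : (2*m)^2 = 4*(m*m) := by ring
      have e2 : (2*m+1)^2 = 4*(m*m) + 4*m + 1 := by ring
      omega
    · have e1 : (2*m+1)^2 = 4*(m*m) + 4*m + 1 := by ring
      have e2 : (2*m+1+1)^2 = 4*(m*m) + 8*m + 4 := by ring
      omega

lemma card_idxS (k : ℕ) : (idxS k).card = k ^ 2 / 4 := by
  rw [idxS, Finset.card_sigma]
  simp only [Nat.card_Icc]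
  rw [← sum_half k]
  exact Finset.sum_congr rfl (fun b _ => by omega)

lemma half_mul (k : ℕ) : k / 2 * (k - k / 2) = k ^ 2 / 4 := by
  obtain ⟨m, rfl | rfl⟩ := k.even_or_odd'
  · have h1 : 2 * m / 2 = m := by omega
    rw [h1, show 2 * m - m = m from by omega,
      show (2*m)^2 = m * m * 4 from by ring, Nat.mul_div_cancel _ (by norm_num)]
  · have h1 : (2 * m + 1) / 2 = m := by omega
    rw [h1, show 2 * m + 1 - m = m + 1 from by omega]
    have h2 : (2*m+1)^2 = (m * (m+1)) * 4 + 1 := by ring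
    omega

/-- Uniqueness of a threshold-crossing consecutive pair in a sorted list. -/
lemma cross_unique {l : List ℕ} (hl : l.Chain' (· < ·)) {t i j i' j' : ℕ}
    (h1 : [i, j] <:+: l) (h2 : [i', j'] <:+: l)
    (hi : i ≤ t) (hj : t < j) (hi' : i' ≤ t) (hj' : t < j') : i = i' ∧ j = j' := by
  have hp : l.Pairwise (· < ·) := List.isChain_iff_pairwise.1 hl
  rw [List.pairwise_iff_getElem] at hp
  obtain ⟨s, u, hs⟩ := h1
  obtain ⟨s', u', hs'⟩ := h2
  have hlen : s.length + 2 ≤ l.length := by rw [← hs]; simp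
  have hlen' : s'.length + 2 ≤ l.length := by rw [← hs']; simp
  have gi : l[s.length]? = some i := by
    rw [← hs]; simp only [List.append_assoc]
    rw [List.getElem?_append_right le_rfl]; simp
  have gj : l[s.length + 1]? = some j := by
    rw [← hs]; simp only [List.append_assoc]
    rw [List.getElem?_append_right (by omega)]; simp
  have gi' : l[s'.length]? = some i' := by
    rw [← hs']; simp only [List.append_assoc]
    rw [List.getElem?_append_right le_rfl]; simp
  have gj' : l[s'.length + 1]? = some j' := by
    rw [← hs']; simp only [List.append_assoc]
    rw [List.getElem?_append_right (by omega)]; simp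
  have val : ∀ (n : ℕ) (x : ℕ) (h : n < l.length), l[n]? = some x → l[n] = x := by
    intro n x h hx
    rw [List.getElem?_eq_getElem h] at hx
    exact Option.some_inj.1 hx
  rcases Nat.lt_trichotomy s.length s'.length with h | h | h
  · exfalso
    rcases Nat.lt_or_ge (s.length + 1) s'.length with hc | hc
    · have := hp (s.length + 1) s'.length (by omega) (by omega) hc
      rw [val _ _ (by omega) gj, val _ _ (by omega) gi'] at this
      omega
    · have he : s.length + 1 = s'.length := by omega
      rw [he] at gj
      rw [gj] at gi'
      have := Option.some_inj.1 gi'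
      omega
  · rw [h] at gi gj
    rw [gi] at gi'
    rw [gj] at gj'
    exact ⟨Option.some_inj.1 gi', Option.some_inj.1 gj'⟩
  · exfalso
    rcases Nat.lt_or_ge (s'.length + 1) s.length with hc | hc
    · have := hp (s'.length + 1) s.length (by omega) (by omega) hc
      rw [val _ _ (by omega) gj', val _ _ (by omega) gi] at this
      omega
    · have he : s'.length + 1 = s.length := by omega
      rw [he] at gj'
      rw [gj'] at gi
      have := Option.some_inj.1 gi
      omega

/-- There is a `k`-covering family of exactly `⌊k²/4⌋` lists; in particular the
minimum possible size `λ(k)` of a `k`-covering family equals `⌊k²/4⌋`. -/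
theorem covering_family_min_size (k : ℕ) (hk : 0 < k) :
    (∃ L : Finset (List ℕ), IsCoveringFamily k L ∧ L.card = k ^ 2 / 4) ∧
    IsLeast {n : ℕ | ∃ L : Finset (List ℕ), IsCoveringFamily k L ∧ L.card = n}
      (k ^ 2 / 4) := by
  classical
  set F : (_ : ℕ) × ℕ → List ℕ := fun p => apList k p.2 (p.1 - p.2) with hF
  set L : Finset (List ℕ) := (idxS k).image F with hL
  have hcond : ∀ p ∈ idxS k, 1 ≤ p.2 ∧ 0 < p.1 - p.2 ∧ p.2 + (p.1 - p.2) ≤ k := by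
    intro p hp
    rw [mem_idxS] at hp
    omega
  have hcov : IsCoveringFamily k L := by
    refine ⟨?_, ?_, ?_⟩
    · intro l hl
      rw [hL, Finset.mem_image] at hl
      obtain ⟨p, hp, rfl⟩ := hl
      exact apList_chain _ _ _ (hcond p hp).2.1
    · intro l hl x hx
      rw [hL, Finset.mem_image] at hl
      obtain ⟨p, hp, rfl⟩ := hl
      obtain ⟨h1, h2, h3⟩ := hcond p hp
      exact apList_mem h2 h1 (by omega) hx
    · intro i j hi hij hjk
      set d := j - i with hd
      set a := (i - 1) % d + 1 with ha
      have hd0 : 0 < d := by omega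
      have hmod : (i - 1) % d < d := Nat.mod_lt _ hd0
      have hmodle : (i - 1) % d ≤ i - 1 := Nat.mod_le _ _
      have hai : a ≤ i := by omega
      have hdvd : d ∣ (i - a) := by
        refine ⟨(i - 1) / d, ?_⟩
        have := Nat.div_add_mod (i - 1) d
        omega
      have hik : i + d ≤ k := by omega
      refine ⟨F ⟨a + d, a⟩, ?_, ?_⟩
      · rw [hL]
        apply Finset.mem_image_of_mem
        rw [mem_idxS]
        simp only
        omega
      · have : F ⟨a + d, a⟩ = apList k a d := by
          rw [hF]; simp
        rw [this, show j = i + d from by omega]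
        exact apList_infix hd0 hai hdvd hik
  have hcard : L.card = k ^ 2 / 4 := by
    rw [hL, Finset.card_image_of_injOn, card_idxS]
    intro p hp q hq hpq
    rw [Finset.mem_coe, mem_idxS] at hp hq
    have hp2 := apList_take2 (k := k) (a := p.2) (d := p.1 - p.2) (by omega) (by omega)
    have hq2 := apList_take2 (k := k) (a := q.2) (d := q.1 - q.2) (by omega) (by omega)
    rw [hF] at hpq
    simp only at hpq
    rw [hpq] at hp2
    have e1 : p.2 = q.2 := by
      have := hp2.1.symm.trans hq2.1
      exact Option.some_inj.1 this
    have e2 : p.2 + (p.1 - p.2) = q.2 + (q.1 - q.2) := by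
      have := hp2.2.symm.trans hq2.2
      exact Option.some_inj.1 this
    have e3 : p.1 = q.1 := by omega
    exact Sigma.ext e3 (by rw [e1])
  refine ⟨⟨L, hcov, hcard⟩, ⟨L, hcov, hcard⟩, ?_⟩
  rintro n ⟨L', hcov', rfl⟩
  set t := k / 2 with ht
  set P : Finset (ℕ × ℕ) := Finset.Icc 1 t ×ˢ Finset.Icc (t+1) k with hP
  have hPcard : P.card = k ^ 2 / 4 := by
    rw [hP, Finset.card_product, Nat.card_Icc, Nat.card_Icc, ht]
    rw [show t + 1 - 1 = t from by omega, show k + 1 - (t + 1) = k - t from by omega, ← half_mul k]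
  set f : ℕ × ℕ → List ℕ := fun p =>
    if h : ∃ l ∈ L', [p.1, p.2] <:+: l then h.choose else [] with hf
  have hPmem : ∀ p ∈ P, 1 ≤ p.1 ∧ p.1 ≤ t ∧ t + 1 ≤ p.2 ∧ p.2 ≤ k := by
    intro p hp
    rw [hP, Finset.mem_product, Finset.mem_Icc, Finset.mem_Icc] at hp
    omega
  have hex : ∀ p ∈ P, ∃ l ∈ L', [p.1, p.2] <:+: l := by
    intro p hp
    obtain ⟨h1, h2, h3, h4⟩ := hPmem p hp
    exact hcov'.2.2 p.1 p.2 h1 (by omega) h4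
  have hfspec : ∀ p ∈ P, f p ∈ L' ∧ [p.1, p.2] <:+: f p := by
    intro p hp
    rw [hf]
    simp only [dif_pos (hex p hp)]
    exact (hex p hp).choose_spec
  rw [← hPcard]
  apply Finset.card_le_card_of_injOn f (fun p hp => (hfspec p hp).1)
  intro p hp q hq hpq
  rw [Finset.mem_coe] at hp hq
  obtain ⟨hp1, hp2⟩ := hfspec p hp
  obtain ⟨hq1, hq2⟩ := hfspec q hq
  rw [hpq] at hp2
  have hchain := hcov'.1 (f q) hq1
  obtain ⟨ha, hb, hc, hd⟩ := hPmem p hp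
  obtain ⟨ha', hb', hc', hd'⟩ := hPmem q hq
  obtain ⟨e1, e2⟩ := cross_unique hchain hp2 hq2 hb (by omega) hb' (by omega)
  exact Prod.ext e1 e2
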